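/- Let S be an integral domain with fraction field Q, J a finite set, and Z ⊆ ∏_{x∈J} S the structure algebra of a moment graph on J with nonzero edge labels. Then the inclusion Z ⊆ ∏_{x∈J} S becomes an isomorphism after tensoring with Q over S; equivalently, Z ⊗_S Q ≅ ∏_{x∈J} Q. -/

import Mathlib

open scoped TensorProduct

set_option maxHeartbeats 800000 in
set_option synthInstance.maxHeartbeats 400000 in
/-- For an integral domain `S` with fraction field `Q` and the structure algebra
`Z ⊆ ∏_{x ∈ J} S` of a moment graph with nonzero edge labels on a finite vertex
set `J`, the inclusion `Z ⊆ ∏_{x ∈ J} S` becomes an isomorphism after tensoring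
with `Q` over `S`; that is, `Q ⊗_S Z → Q ⊗_S ∏_{x ∈ J} S ≅ ∏_{x ∈ J} Q` is
bijective. -/
theorem stmt10 {J : Type*} [Fintype J] {S : Type*} [CommRing S] [IsDomain S]
    (edge : J → J → Prop) (lab : J → J → S)
    (hne : ∀ x y, edge x y → lab x y ≠ 0)
    (Z : Subalgebra S (J → S))
    (hZ : (Z : Set (J → S)) = {z | ∀ x y, edge x y → lab x y ∣ z x - z y}) :
    Function.Bijective
      (LinearMap.baseChange (FractionRing S) (Subalgebra.toSubmodule Z).subtype) := by
  classical
  set Q := FractionRing S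
  haveI : Module.Flat S Q := IsLocalization.flat _ (nonZeroDivisors S)
  constructor
  · have h := Module.Flat.lTensor_preserves_injective_linearMap (M := Q)
      (Subalgebra.toSubmodule Z).subtype (Submodule.injective_subtype _)
    rwa [← LinearMap.baseChange_eq_ltensor] at h
  · -- surjectivity
    set c : S := ∏ x : J, ∏ y : J, if edge x y then lab x y else 1 with hc_def
    have hc : c ≠ 0 := by
      apply Finset.prod_ne_zero_iff.mpr
      intro x _
      apply Finset.prod_ne_zero_iff.mpr
      intro y _
      split_ifs with h
      · exact hne x y h
      · exact one_ne_zero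
    have hdvd : ∀ x y, edge x y → lab x y ∣ c := by
      intro x y h
      refine dvd_trans ?_ (Finset.dvd_prod_of_mem _ (Finset.mem_univ x))
      have := Finset.dvd_prod_of_mem (fun y => if edge x y then lab x y else 1)
        (Finset.mem_univ y)
      simpa [h] using this
    have hmem : ∀ f : J → S, c • f ∈ Z := by
      intro f
      have : c • f ∈ (Z : Set (J → S)) := by
        rw [hZ]
        intro x y h
        show lab x y ∣ (c • f) x - (c • f) y
        simp only [Pi.smul_apply, smul_eq_mul]
        have : c * f x - c * f y = c * (f x - f y) := by ring
        rw [this]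
        exact Dvd.dvd.mul_right (hdvd x y h) _
      exact this
    intro z
    induction z using TensorProduct.induction_on with
    | zero => exact ⟨0, map_zero _⟩
    | tmul q f =>
      have hcQ : (algebraMap S Q) c ≠ 0 := by
        simpa using (IsFractionRing.to_map_eq_zero_iff (K := Q)).not.mpr hc
      refine ⟨(q * (algebraMap S Q c)⁻¹) ⊗ₜ[S] ⟨c • f, hmem f⟩, ?_⟩
      rw [LinearMap.baseChange_tmul]
      show (q * (algebraMap S Q c)⁻¹) ⊗ₜ[S] (c • f) = q ⊗ₜ[S] f
      rw [TensorProduct.tmul_smul, TensorProduct.smul_tmul']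
      congr 1
      rw [Algebra.smul_def]
      field_simp
      exact mul_comm _ _
    | add a b ha hb =>
      obtain ⟨a', ha'⟩ := ha
      obtain ⟨b', hb'⟩ := hb
      exact ⟨a' + b', by rw [map_add, ha', hb']⟩
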